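/- Let (Ω, μ) be a probability space, J ∈ [0, 1], m ≥ 1 an integer, and b : Fin m → ℕ with b(i) ≥ 1 for each i. For an integer b ≥ 1 write c_b = 1/2^b and P_b = c_b + (1 − c_b)·J. Let X : Fin m → Ω → ℝ be random variables such that each X(i) takes values in {0, 1}, E[X(i)] = P_{b(i)} for every i, and E[X(i)·X(j)] = P_{b(i)+b(j)} for every i ≠ j. Define the estimator Ĵ_m = (∑_{i} X(i) − ∑_{i} c_{b(i)}) / (∑_{i} (1 − c_{b(i)})). Then the variance of Ĵ_m equals [∑_{i} P_{b(i)}(1 − P_{b(i)}) + ∑_{i ≠ j} (P_{b(i)+b(j)} − P_{b(i)}·P_{b(j)})] / (∑_{i} (1 − c_{b(i)}))². -/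

import Mathlib

open MeasureTheory ProbabilityTheory Finset

/-- Variance of the Pb-Hash estimator (Theorem 2): with `m` chunks of `b i` bits,
`c_b = 1/2^b`, `P_b = c_b + (1 − c_b)·J`, collision indicators `X i` with
`E[X i] = P_{b i}` and `E[X i · X j] = P_{b i + b j}` for `i ≠ j`, the estimator
`Ĵ_m = (∑ X i − ∑ c_{b i})/(∑ (1 − c_{b i}))` has variance
`[∑ P_{b i}(1 − P_{b i}) + ∑_{i ≠ j} (P_{b i + b j} − P_{b i} P_{b j})] / (∑ (1 − c_{b i}))²`. -/
theorem pbHash_variance {Ω : Type*} [MeasurableSpace Ω]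
    (μ : Measure Ω) [IsProbabilityMeasure μ]
    (J : ℝ) (hJ : J ∈ Set.Icc (0 : ℝ) 1) (m : ℕ) (hm : 1 ≤ m)
    (b : Fin m → ℕ) (hb : ∀ i, 1 ≤ b i)
    (X : Fin m → Ω → ℝ) (hXmeas : ∀ i, Measurable (X i))
    (hX01 : ∀ i ω, X i ω = 0 ∨ X i ω = 1)
    (hXmean : ∀ i, ∫ ω, X i ω ∂μ = 1 / 2 ^ b i + (1 - 1 / 2 ^ b i) * J)
    (hXY : ∀ i j, i ≠ j →
      ∫ ω, X i ω * X j ω ∂μ = 1 / 2 ^ (b i + b j) + (1 - 1 / 2 ^ (b i + b j)) * J) :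
    variance (fun ω => ((∑ i, X i ω) - ∑ i, 1 / (2 : ℝ) ^ b i)
        / (∑ i, (1 - 1 / (2 : ℝ) ^ b i))) μ
      = ((∑ i, (1 / 2 ^ b i + (1 - 1 / 2 ^ b i) * J)
              * (1 - (1 / 2 ^ b i + (1 - 1 / (2 : ℝ) ^ b i) * J)))
          + ∑ i, ∑ j, if i ≠ j then
              (1 / 2 ^ (b i + b j) + (1 - 1 / 2 ^ (b i + b j)) * J)
                - (1 / 2 ^ b i + (1 - 1 / 2 ^ b i) * J)
                  * (1 / 2 ^ b j + (1 - 1 / (2 : ℝ) ^ b j) * J)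
            else 0)
        / (∑ i, (1 - 1 / (2 : ℝ) ^ b i)) ^ 2 := by
  haveI : Nonempty (Fin m) := Fin.pos_iff_nonempty.mp hm
  set P : Fin m → ℝ := fun i => 1 / 2 ^ b i + (1 - 1 / 2 ^ b i) * J with hP
  set Q : Fin m → Fin m → ℝ :=
    fun i j => 1 / 2 ^ (b i + b j) + (1 - 1 / 2 ^ (b i + b j)) * J with hQ
  set d : ℝ := ∑ i, (1 - 1 / (2 : ℝ) ^ b i) with hd
  set cs : ℝ := ∑ i, 1 / (2 : ℝ) ^ b i with hcs
  -- boundedness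
  have hbd : ∀ i ω, ‖X i ω‖ ≤ 1 := by
    intro i ω; rcases hX01 i ω with h | h <;> simp [h]
  have hXint : ∀ i, Integrable (X i) μ := fun i =>
    (integrable_const (1 : ℝ)).mono' (hXmeas i).aestronglyMeasurable (ae_of_all _ (hbd i))
  have hXYint : ∀ i j, Integrable (fun ω => X i ω * X j ω) μ := by
    intro i j
    refine (integrable_const (1 : ℝ)).mono'
      ((hXmeas i).mul (hXmeas j)).aestronglyMeasurable (ae_of_all _ fun ω => ?_)
    have h1 := hbd i ω; have h2 := hbd j ω
    calc ‖X i ω * X j ω‖ = ‖X i ω‖ * ‖X j ω‖ := norm_mul _ _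
      _ ≤ 1 := by nlinarith [norm_nonneg (X i ω), norm_nonneg (X j ω)]
  -- Memℒp of estimator
  have hX2 : ∀ i, MemLp (X i) 2 μ := fun i =>
    MemLp.of_bound (hXmeas i).aestronglyMeasurable 1 (ae_of_all _ (hbd i))
  have hS2 : MemLp (fun ω => ∑ i, X i ω) 2 μ := by
    have h := memLp_finset_sum' (univ : Finset (Fin m)) (fun i _ => hX2 i)
    have he : (∑ i : Fin m, X i) = fun ω => ∑ i, X i ω := by
      funext ω; simp
    rwa [he] at h
  have hF2 : MemLp (fun ω => ((∑ i, X i ω) - cs) / d) 2 μ := by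
    refine MemLp.ae_eq (ae_of_all _ fun ω => ?_)
      ((hS2.sub (memLp_const cs)).const_mul d⁻¹)
    simp [Pi.sub_apply, div_eq_inv_mul]
  -- integrals
  have hSint : Integrable (fun ω => ∑ i, X i ω) μ :=
    integrable_finset_sum _ fun i _ => hXint i
  have hIS : ∫ ω, (∑ i, X i ω) ∂μ = ∑ i, P i := by
    rw [integral_finset_sum _ fun i _ => hXint i]
    exact Finset.sum_congr rfl fun i _ => hXmean i
  have hdiag : ∀ i, ∫ ω, X i ω * X i ω ∂μ = P i := by
    intro i
    have he : (fun ω => X i ω * X i ω) = X i := by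
      funext ω; rcases hX01 i ω with h | h <;> simp [h]
    rw [he]; exact hXmean i
  have hIS2 : ∫ ω, (∑ i, X i ω) ^ 2 ∂μ
      = ∑ i, ∑ j, (if i = j then P i else Q i j) := by
    have hsq : ∀ ω : Ω, (∑ i, X i ω) ^ 2 = ∑ i, ∑ j, X i ω * X j ω := by
      intro ω; rw [sq, Finset.sum_mul_sum]
    simp_rw [hsq]
    rw [integral_finset_sum _ fun i _ => integrable_finset_sum _ fun j _ => hXYint i j]
    refine Finset.sum_congr rfl fun i _ => ?_
    rw [integral_finset_sum _ fun j _ => hXYint i j]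
    refine Finset.sum_congr rfl fun j _ => ?_
    by_cases h : i = j
    · subst h; simp [hdiag i]
    · simp [h, hXY i j h, hQ]
  have hS2int : Integrable (fun ω => (∑ i, X i ω) ^ 2) μ := by
    have hsq : (fun ω => (∑ i, X i ω) ^ 2) = fun ω => ∑ i, ∑ j, X i ω * X j ω := by
      funext ω; rw [sq, Finset.sum_mul_sum]
    rw [hsq]
    exact integrable_finset_sum _ fun i _ => integrable_finset_sum _ fun j _ => hXYint i j
  have hmean : ∫ ω, ((∑ i, X i ω) - cs) / d ∂μ = ((∑ i, P i) - cs) / d := by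
    rw [integral_div, integral_sub hSint (integrable_const cs), integral_const]
    simp [hIS]
  have hmul : Integrable (fun a => 2 * cs * ∑ i, X i a) μ := hSint.const_mul _
  have hsub : Integrable (fun a => (∑ i, X i a) ^ 2 - 2 * cs * ∑ i, X i a) μ :=
    hS2int.sub hmul
  have hsqint : ∫ ω, ((fun ω => ((∑ i, X i ω) - cs) / d) ^ 2) ω ∂μ
      = ((∫ ω, (∑ i, X i ω) ^ 2 ∂μ) - 2 * cs * (∑ i, P i) + cs ^ 2) / d ^ 2 := by
    have hfun : ∀ ω : Ω, ((fun ω => ((∑ i, X i ω) - cs) / d) ^ 2) ω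
        = ((∑ i, X i ω) ^ 2 - 2 * cs * (∑ i, X i ω) + cs ^ 2) / d ^ 2 := by
      intro ω; simp only [Pi.pow_apply]; ring
    simp_rw [hfun]
    rw [integral_div, integral_add hsub (integrable_const _),
      integral_sub hS2int hmul, integral_const, integral_const_mul, hIS]
    simp
  have hd0 : (0 : ℝ) < d := by
    rw [hd]
    apply Finset.sum_pos _ Finset.univ_nonempty
    intro i _
    have h2 : (2 : ℝ) ≤ 2 ^ b i := by
      calc (2 : ℝ) = 2 ^ 1 := (pow_one 2).symm
        _ ≤ 2 ^ b i := pow_le_pow_right₀ (by norm_num) (hb i)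
    have : 1 / (2 : ℝ) ^ b i ≤ 1 / 2 := by
      apply one_div_le_one_div_of_le <;> linarith
    linarith
  have hdne : d ≠ 0 := ne_of_gt hd0
  -- numerator identity
  have hnum : (∑ i, ∑ j, (if i = j then P i else Q i j)) - (∑ i, P i) ^ 2
      = (∑ i, P i * (1 - P i))
        + ∑ i, ∑ j, (if i ≠ j then Q i j - P i * P j else 0) := by
    rw [sq, Finset.sum_mul_sum]
    have h1 : (∑ i, P i * (1 - P i))
        = ∑ i, ∑ j, (if i = j then P i * (1 - P i) else 0) := by
      refine Finset.sum_congr rfl fun i _ => ?_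
      rw [Finset.sum_ite_eq]
      simp
    rw [h1, ← Finset.sum_add_distrib, ← Finset.sum_sub_distrib]
    refine Finset.sum_congr rfl fun i _ => ?_
    rw [← Finset.sum_add_distrib, ← Finset.sum_sub_distrib]
    refine Finset.sum_congr rfl fun j _ => ?_
    by_cases h : i = j
    · subst h; simp; ring
    · simp [h]
  have alg : ∀ (A s c dd : ℝ), dd ≠ 0 →
      (A - 2 * c * s + c ^ 2) / dd ^ 2 - ((s - c) / dd) ^ 2 = (A - s ^ 2) / dd ^ 2 := by
    intro A s c dd h; field_simp; ring
  rw [variance_eq_sub hF2, hsqint, hmean, hIS2, alg _ _ _ _ hdne, hnum]
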